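/- For all τ, ε ∈ (0,1) there exists ν₀ > 0 such that for every 0 < ν ≤ min(ν₀, τ) there exists n₀ ∈ ℕ such that the following holds for all n ≥ n₀: if G is a digraph on n vertices with δ⁰(G) ≥ n/2, then G is ε-extremal or G is a robust (ν,τ)-outexpander. -/

import Mathlib

open Finset

open scoped Classical

noncomputable section

variable {n : ℕ}

def dPlus (G : Finset (Fin n × Fin n)) (X : Finset (Fin n)) (x : Fin n) : ℕ :=
  (G.filter fun e => e.1 = x ∧ e.2 ∈ X).card

def dMinus (G : Finset (Fin n × Fin n)) (X : Finset (Fin n)) (x : Fin n) : ℕ :=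
  (G.filter fun e => e.2 = x ∧ e.1 ∈ X).card

def MinSemi (G : Finset (Fin n × Fin n)) (r : ℝ) : Prop :=
  ∀ x : Fin n, r ≤ (dPlus G Finset.univ x : ℝ) ∧ r ≤ (dMinus G Finset.univ x : ℝ)

def Partition4 (A B S T : Finset (Fin n)) : Prop :=
  A ∪ B ∪ S ∪ T = Finset.univ ∧ Disjoint A B ∧ Disjoint A S ∧ Disjoint A T ∧
    Disjoint B S ∧ Disjoint B T ∧ Disjoint S T

/-- `G` is `ε`-extremal: there is a partition `A,B,S,T` of the vertices with
`|a-b| ≤ 1`, `|s-t| ≤ 1` and `e(A∪S, A∪T) < ε n²`. -/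
def EpsExtremal (G : Finset (Fin n × Fin n)) (ε : ℝ) : Prop :=
  ∃ A B S T : Finset (Fin n), Partition4 A B S T ∧
    |(A.card : ℝ) - (B.card : ℝ)| ≤ 1 ∧ |(S.card : ℝ) - (T.card : ℝ)| ≤ 1 ∧
    ((G.filter fun e => e.1 ∈ A ∪ S ∧ e.2 ∈ A ∪ T).card : ℝ) < ε * (n : ℝ) ^ 2

/-- `G` is a robust `(ν,τ)`-outexpander: every vertex set `S` with `τn < |S| < (1-τ)n`
has `ν`-robust outneighbourhood of size at least `|S| + νn`. -/
def RobustExpander (G : Finset (Fin n × Fin n)) (ν τ : ℝ) : Prop :=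
  ∀ S : Finset (Fin n), τ * n < (S.card : ℝ) → (S.card : ℝ) < (1 - τ) * n →
    (S.card : ℝ) + ν * n ≤
      ((Finset.univ.filter fun x : Fin n => ν * n ≤ (dMinus G S x : ℝ)).card : ℝ)


-- ## Auxiliary lemmas

lemma filter_fst_card_le (G : Finset (Fin n × Fin n)) (D : Finset (Fin n)) :
    (G.filter fun e => e.1 ∈ D).card ≤ D.card * n := by
  calc (G.filter fun e => e.1 ∈ D).card ≤ (D ×ˢ (Finset.univ : Finset (Fin n))).card := by
        apply Finset.card_le_card
        intro e he
        simp only [Finset.mem_filter, Finset.mem_product, Finset.mem_univ, and_true] at *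
        exact he.2
    _ = D.card * n := by simp [Finset.card_product]

lemma filter_snd_card_le (G : Finset (Fin n × Fin n)) (D : Finset (Fin n)) :
    (G.filter fun e => e.2 ∈ D).card ≤ D.card * n := by
  calc (G.filter fun e => e.2 ∈ D).card ≤ ((Finset.univ : Finset (Fin n)) ×ˢ D).card := by
        apply Finset.card_le_card
        intro e he
        simp only [Finset.mem_filter, Finset.mem_product, Finset.mem_univ, true_and] at *
        exact he.2
    _ = D.card * n := by simp [Finset.card_product, Nat.mul_comm]

lemma dMinus_le_card (G : Finset (Fin n × Fin n)) (X : Finset (Fin n)) (w : Fin n) :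
    dMinus G X w ≤ X.card := by
  unfold dMinus
  apply Finset.card_le_card_of_injOn (fun e => e.1)
  · intro e he
    simp only [Finset.mem_coe, Finset.mem_filter] at he
    exact he.2.2
  · intro e he f hf hef
    simp only [Finset.coe_filter, Set.mem_setOf_eq] at he hf
    exact Prod.ext hef (he.2.1.trans hf.2.1.symm)

lemma card_filter_eq_sum_dMinus (G : Finset (Fin n × Fin n)) (X Y : Finset (Fin n)) :
    (G.filter fun e => e.1 ∈ X ∧ e.2 ∈ Y).card = ∑ w ∈ Y, dMinus G X w := by
  rw [Finset.card_eq_sum_card_fiberwise (f := fun e => e.2) (t := Y)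
    (by intro e he; simp only [Finset.mem_coe, Finset.mem_filter] at he; exact he.2.2)]
  apply Finset.sum_congr rfl
  intro w hw
  unfold dMinus
  rw [Finset.filter_filter]
  congr 1
  apply Finset.filter_congr
  intro e _
  constructor
  · rintro ⟨⟨h1, _⟩, h3⟩; exact ⟨h3, h1⟩
  · rintro ⟨h3, h1⟩; subst h3; exact ⟨⟨h1, hw⟩, rfl⟩

lemma card_filter_eq_sum_dPlus (G : Finset (Fin n × Fin n)) (X : Finset (Fin n)) :
    (G.filter fun e => e.1 ∈ X ∧ e.2 ∈ (Finset.univ : Finset (Fin n))).card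
      = ∑ v ∈ X, dPlus G Finset.univ v := by
  rw [Finset.card_eq_sum_card_fiberwise (f := fun e => e.1) (t := X)
    (by intro e he; simp only [Finset.mem_coe, Finset.mem_filter] at he; exact he.2.1)]
  apply Finset.sum_congr rfl
  intro v hv
  unfold dPlus
  rw [Finset.filter_filter]
  congr 1
  apply Finset.filter_congr
  intro e _
  constructor
  · rintro ⟨⟨_, h2⟩, h3⟩; exact ⟨h3, h2⟩
  · rintro ⟨h3, h2⟩; subst h3; exact ⟨⟨hv, h2⟩, rfl⟩

lemma dMinus_split (G : Finset (Fin n × Fin n)) (X : Finset (Fin n)) (w : Fin n) :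
    dMinus G Finset.univ w ≤ dMinus G X w + dMinus G (Finset.univ \ X) w := by
  unfold dMinus
  refine le_trans (Finset.card_le_card ?_) (Finset.card_union_le _ _)
  intro e he
  simp only [Finset.mem_filter, Finset.mem_union, Finset.mem_sdiff, Finset.mem_univ,
    and_true, true_and] at *
  by_cases h : e.1 ∈ X
  · tauto
  · tauto

lemma card_filter_move (G : Finset (Fin n × Fin n)) (X X' Y Y' : Finset (Fin n)) :
    (G.filter fun e => e.1 ∈ X' ∧ e.2 ∈ Y').card ≤
      (G.filter fun e => e.1 ∈ X ∧ e.2 ∈ Y).card + (X' \ X).card * n + (Y' \ Y).card * n := by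
  have hsub : (G.filter fun e => e.1 ∈ X' ∧ e.2 ∈ Y') ⊆
      ((G.filter fun e => e.1 ∈ X ∧ e.2 ∈ Y) ∪ (G.filter fun e => e.1 ∈ X' \ X))
        ∪ (G.filter fun e => e.2 ∈ Y' \ Y) := by
    intro e he
    simp only [Finset.mem_filter, Finset.mem_union, Finset.mem_sdiff] at *
    obtain ⟨heG, h1, h2⟩ := he
    by_cases hx : e.1 ∈ X
    · by_cases hy : e.2 ∈ Y
      · exact Or.inl (Or.inl ⟨heG, hx, hy⟩)
      · exact Or.inr ⟨heG, h2, hy⟩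
    · exact Or.inl (Or.inr ⟨heG, h1, hx⟩)
  refine le_trans (Finset.card_le_card hsub) ?_
  refine le_trans (Finset.card_union_le _ _) ?_
  have h1 := Finset.card_union_le (G.filter fun e => e.1 ∈ X ∧ e.2 ∈ Y)
    (G.filter fun e => e.1 ∈ X' \ X)
  have h2 := filter_fst_card_le G (X' \ X)
  have h3 := filter_snd_card_le G (Y' \ Y)
  omega

lemma exists_adjust (X : Finset (Fin n)) (k : ℕ) (hk : k ≤ n) :
    ∃ X' : Finset (Fin n), X'.card = k ∧ ((X' \ X).card : ℝ) ≤ |(k : ℝ) - (X.card : ℝ)| := by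
  rcases le_total k X.card with h | h
  · obtain ⟨X', hsub, hcard⟩ := Finset.exists_subset_card_eq h
    refine ⟨X', hcard, ?_⟩
    have : X' \ X = ∅ := Finset.sdiff_eq_empty_iff_subset.mpr hsub
    rw [this]
    simp [abs_nonneg]
  · obtain ⟨X', hsub, _, hcard⟩ := Finset.exists_subsuperset_card_eq (Finset.subset_univ X)
      h (by simpa using hk)
    refine ⟨X', hcard, ?_⟩
    have hc : (X' \ X).card = k - X.card := by
      rw [Finset.card_sdiff_of_subset hsub, hcard]
    rw [hc]
    rw [Nat.cast_sub h]
    exact le_abs_self _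

set_option maxHeartbeats 1600000 in
/-- a digraph with minimum semidegree at least `n/2` is `ε`-extremal or a
robust `(ν,τ)`-outexpander. -/
theorem stmt_3 :
    ∀ τ ε : ℝ, 0 < τ → τ < 1 → 0 < ε → ε < 1 →
      ∃ ν₀ : ℝ, 0 < ν₀ ∧ ∀ ν : ℝ, 0 < ν → ν ≤ min ν₀ τ →
        ∃ n₀ : ℕ, ∀ n : ℕ, n₀ ≤ n →
          ∀ G : Finset (Fin n × Fin n), (∀ e ∈ G, e.1 ≠ e.2) →
            MinSemi G ((n : ℝ) / 2) →
            EpsExtremal G ε ∨ RobustExpander G ν τ := by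
  intro τ ε hτ hτ1 hε hε1
  refine ⟨ε * τ / 10, by positivity, ?_⟩
  intro ν hν hνle
  obtain ⟨hνν₀, hντ⟩ := le_min_iff.mp hνle
  refine ⟨⌈(4:ℝ)/ε⌉₊ + 1, ?_⟩
  intro n hn G _ hsemi
  by_cases hrob : RobustExpander G ν τ
  · exact Or.inr hrob
  left
  unfold RobustExpander at hrob
  push_neg at hrob
  obtain ⟨X, hX1, hX2, hX3⟩ := hrob
  -- numerics
  have hn4 : (4:ℝ)/ε < n := by
    have h1 : (4:ℝ)/ε ≤ ⌈(4:ℝ)/ε⌉₊ := Nat.le_ceil _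
    have h2 : ((⌈(4:ℝ)/ε⌉₊ : ℕ) : ℝ) + 1 ≤ n := by exact_mod_cast hn
    linarith
  have hnpos : (0:ℝ) < n := lt_trans (by positivity) hn4
  have hεn : 4 < ε * n := by
    rw [div_lt_iff₀ hε] at hn4; linarith [hn4]
  have hν2 : ν < τ := lt_of_le_of_lt hνν₀ (by
    have := mul_lt_mul_of_pos_right hε1 hτ
    linarith only [this, hτ])
  have hνn : (0:ℝ) < ν * n := mul_pos hν hnpos
  have hτνn : (0:ℝ) ≤ (1 - τ) * (ν * n) :=
    mul_nonneg (by linarith) (le_of_lt hνn)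
  set R := Finset.univ.filter (fun x : Fin n => ν * n ≤ ((dMinus G X x : ℕ) : ℝ)) with hRdef
  set Y := (Finset.univ : Finset (Fin n)) \ R with hYdef
  have hRsub : R ⊆ Finset.univ := Finset.filter_subset _ _
  have hRn : R.card ≤ n := by simpa using Finset.card_le_univ R
  have hXn : X.card ≤ n := by simpa using Finset.card_le_univ X
  set x : ℝ := (X.card : ℝ) with hxdef
  set r : ℝ := (R.card : ℝ) with hrdef
  have hxleN : x ≤ n := by rw [hxdef]; exact_mod_cast hXn
  have hrleN : r ≤ n := by rw [hrdef]; exact_mod_cast hRn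
  -- Step A: out-degrees from X
  have hA : x * ((n:ℝ)/2) ≤ ∑ v ∈ X, ((dPlus G Finset.univ v : ℕ) : ℝ) := by
    calc x * ((n:ℝ)/2) = ∑ _v ∈ X, (n:ℝ)/2 := by
          rw [Finset.sum_const, nsmul_eq_mul, hxdef]
      _ ≤ _ := Finset.sum_le_sum fun v _ => (hsemi v).1
  have hEq1 : (∑ v ∈ X, ((dPlus G Finset.univ v : ℕ) : ℝ))
      = ∑ w ∈ Finset.univ, ((dMinus G X w : ℕ) : ℝ) := by
    rw [← Nat.cast_sum, ← Nat.cast_sum, ← card_filter_eq_sum_dPlus,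
      card_filter_eq_sum_dMinus]
  -- Step B: split the in-degree sum
  have hsplit : (∑ w ∈ Finset.univ, ((dMinus G X w : ℕ) : ℝ))
      = (∑ w ∈ R, ((dMinus G X w : ℕ) : ℝ))
        + ∑ w ∈ Finset.univ.filter (fun w => ¬ (ν * n ≤ ((dMinus G X w : ℕ) : ℝ))),
            ((dMinus G X w : ℕ) : ℝ) := by
    rw [hRdef]
    exact (Finset.sum_filter_add_sum_filter_not _ _ _).symm
  have hB1 : (∑ w ∈ R, ((dMinus G X w : ℕ) : ℝ)) ≤ r * x := by
    calc (∑ w ∈ R, ((dMinus G X w : ℕ) : ℝ)) ≤ ∑ _w ∈ R, x :=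
          Finset.sum_le_sum fun w _ => by
            rw [hxdef]; exact_mod_cast dMinus_le_card G X w
      _ = r * x := by rw [Finset.sum_const, nsmul_eq_mul, hrdef]
  have hB2 : (∑ w ∈ Finset.univ.filter (fun w => ¬ (ν * n ≤ ((dMinus G X w : ℕ) : ℝ))),
      ((dMinus G X w : ℕ) : ℝ)) ≤ ν * n * n := by
    have hc : ((Finset.univ.filter
        (fun w : Fin n => ¬ (ν * n ≤ ((dMinus G X w : ℕ) : ℝ)))).card : ℝ) ≤ n := by
      exact_mod_cast (by simpa using Finset.card_le_univ (Finset.univ.filter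
        (fun w : Fin n => ¬ (ν * n ≤ ((dMinus G X w : ℕ) : ℝ)))) : _ ≤ n)
    calc _ ≤ ∑ _w ∈ Finset.univ.filter (fun w => ¬ (ν * n ≤ ((dMinus G X w : ℕ) : ℝ))),
            (ν * n) := Finset.sum_le_sum fun w hw =>
              le_of_lt (not_le.mp (Finset.mem_filter.mp hw).2)
      _ = ((Finset.univ.filter
            (fun w : Fin n => ¬ (ν * n ≤ ((dMinus G X w : ℕ) : ℝ)))).card : ℝ) * (ν * n) := by
          rw [Finset.sum_const, nsmul_eq_mul]
      _ ≤ ν * n * n := by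
          have h9 := mul_le_mul_of_nonneg_right hc (le_of_lt hνn)
          linarith only [h9]
  have hKey : x * ((n:ℝ)/2) ≤ r * x + ν * n * n := by
    rw [hEq1, hsplit] at hA; linarith
  -- Step C: lower bound on r  (multiplied by τ)
  have hrlow : τ * ((n:ℝ)/2 - r) ≤ ν * n := by
    rcases le_or_gt r ((n:ℝ)/2) with h | h
    · have hprod : τ * (n:ℝ) * ((n:ℝ)/2 - r) ≤ x * ((n:ℝ)/2 - r) :=
        mul_le_mul_of_nonneg_right (le_of_lt hX1) (by linarith)
      have hexp : x * ((n:ℝ)/2 - r) = x * ((n:ℝ)/2) - x * r := by ring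
      have hcomm : r * x = x * r := by ring
      have h5 : τ * ((n:ℝ)/2 - r) * n ≤ ν * n * n := by
        have hexp2 : τ * ((n:ℝ)/2 - r) * n = τ * (n:ℝ) * ((n:ℝ)/2 - r) := by ring
        rw [hexp2]
        linarith only [hprod, hKey, hexp, hcomm]
      exact le_of_mul_le_mul_right (by linarith [h5]) hnpos
    · have : τ * ((n:ℝ)/2 - r) ≤ 0 :=
        mul_nonpos_of_nonneg_of_nonpos (le_of_lt hτ) (by linarith)
      linarith
  -- Step D: Y is nonempty
  have hYcard : (Y.card : ℝ) = n - r := by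
    rw [hYdef, Finset.card_sdiff_of_subset hRsub,
      show (Finset.univ : Finset (Fin n)).card = n by simp, Nat.cast_sub hRn, hrdef]
  have hYpos : (0:ℝ) < (Y.card : ℝ) := by
    rw [hYcard]
    have e1 : (1 - τ) * (n:ℝ) = n - τ * n := by ring
    have e2 : (0:ℝ) < (τ - ν) * n := mul_pos (by linarith) hnpos
    have e3 : (τ - ν) * (n:ℝ) = τ * n - ν * n := by ring
    linarith only [hX2, hX3, e1, e2, e3]
  obtain ⟨w, hw⟩ := Finset.card_pos.mp (show 0 < Y.card by exact_mod_cast hYpos)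
  -- Step E: upper bound on x
  have hxup : x ≤ (n:ℝ)/2 + ν * n := by
    have hwR : ((dMinus G X w : ℕ) : ℝ) < ν * n := by
      rw [hYdef] at hw
      have h₀ := (Finset.mem_sdiff.mp hw).2
      rw [hRdef] at h₀
      simp only [Finset.mem_filter, Finset.mem_univ, true_and] at h₀
      exact not_le.mp h₀
    have h1 : ((n:ℝ)/2) ≤ ((dMinus G Finset.univ w : ℕ) : ℝ) := (hsemi w).2
    have h2 : dMinus G Finset.univ w ≤
        dMinus G X w + dMinus G (Finset.univ \ X) w := dMinus_split G X w
    have h3 : dMinus G (Finset.univ \ X) w ≤ n - X.card := by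
      refine le_trans (dMinus_le_card G _ w) ?_
      rw [Finset.card_sdiff_of_subset (Finset.subset_univ X)]
      simp
    have h4 : ((dMinus G (Finset.univ \ X) w : ℕ) : ℝ) ≤ (n:ℝ) - x := by
      rw [hxdef, ← Nat.cast_sub hXn]
      exact_mod_cast h3
    have h2' : ((dMinus G Finset.univ w : ℕ) : ℝ) ≤
        ((dMinus G X w : ℕ) : ℝ) + ((dMinus G (Finset.univ \ X) w : ℕ) : ℝ) := by
      exact_mod_cast h2
    linarith
  -- Step F: few edges from X to Y
  have hYn : (Y.card : ℝ) ≤ n := by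
    exact_mod_cast (by simpa using Finset.card_le_univ Y : Y.card ≤ n)
  have hEXY : ((G.filter fun e => e.1 ∈ X ∧ e.2 ∈ Y).card : ℝ) ≤ ν * n * n := by
    have h1 : ((G.filter fun e => e.1 ∈ X ∧ e.2 ∈ Y).card : ℝ)
        = ∑ w' ∈ Y, ((dMinus G X w' : ℕ) : ℝ) := by
      rw [← Nat.cast_sum, card_filter_eq_sum_dMinus]
    rw [h1]
    calc (∑ w' ∈ Y, ((dMinus G X w' : ℕ) : ℝ)) ≤ ∑ _w' ∈ Y, (ν * n) := by
          refine Finset.sum_le_sum fun w' hw' => ?_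
          rw [hYdef] at hw'
          have h₀ := (Finset.mem_sdiff.mp hw').2
          rw [hRdef] at h₀
          simp only [Finset.mem_filter, Finset.mem_univ, true_and] at h₀
          exact le_of_lt (not_le.mp h₀)
      _ = (Y.card : ℝ) * (ν * n) := by rw [Finset.sum_const, nsmul_eq_mul]
      _ ≤ ν * n * n := by
          have h9 := mul_le_mul_of_nonneg_right hYn (le_of_lt hνn)
          linarith only [h9]
  -- Step G: adjust sizes
  obtain ⟨X', hX'card, hX'dev⟩ := exists_adjust X (n/2) (Nat.div_le_self n 2)
  obtain ⟨Y', hY'card, hY'dev⟩ := exists_adjust Y (n - n/2) (Nat.sub_le n _)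
  have hkfacts : 2 * (n/2) ≤ n ∧ n ≤ 2 * (n/2) + 1 := by omega
  have hkR1 : 2 * ((n/2 : ℕ) : ℝ) ≤ n := by exact_mod_cast hkfacts.1
  have hkR2 : (n:ℝ) ≤ 2 * ((n/2 : ℕ) : ℝ) + 1 := by exact_mod_cast hkfacts.2
  have htYR : ((n - n/2 : ℕ) : ℝ) = (n:ℝ) - ((n/2 : ℕ) : ℝ) := by
    rw [Nat.cast_sub (Nat.div_le_self n 2)]
  -- bounds on the adjustments, multiplied by τ
  have hxlow : τ * ((n:ℝ)/2 - x) ≤ 2 * ν * n := by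
    have t1 : τ * r ≤ τ * (x + ν * n) :=
      mul_le_mul_of_nonneg_left (le_of_lt hX3) (le_of_lt hτ)
    linarith [hrlow, t1, hτνn]
  have hdX : τ * ((X' \ X).card : ℝ) ≤ 2 * ν * n + τ := by
    have tdev : τ * ((X' \ X).card : ℝ) ≤ τ * |((n/2 : ℕ) : ℝ) - x| :=
      mul_le_mul_of_nonneg_left hX'dev (le_of_lt hτ)
    have txup : τ * x ≤ τ * ((n:ℝ)/2 + ν * n) :=
      mul_le_mul_of_nonneg_left hxup (le_of_lt hτ)
    have tk2 : τ * (n:ℝ) ≤ τ * (2 * ((n/2 : ℕ) : ℝ) + 1) :=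
      mul_le_mul_of_nonneg_left hkR2 (le_of_lt hτ)
    rcases abs_cases (((n/2 : ℕ) : ℝ) - x) with ⟨heq, _⟩ | ⟨heq, _⟩ <;>
      rw [heq] at tdev
    · -- k - x ≥ 0 case : use hxlow and k ≤ n/2
      have tk1 : τ * ((n/2 : ℕ) : ℝ) ≤ τ * ((n:ℝ)/2) :=
        mul_le_mul_of_nonneg_left (by linarith) (le_of_lt hτ)
      linarith only [tdev, hxlow, tk1, hνn, hτ]
    · -- x - k case
      linarith only [tdev, txup, tk2, hτνn, hνn, hτ]
  have hdY : τ * ((Y' \ Y).card : ℝ) ≤ 2 * ν * n + τ := by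
    have tdev : τ * ((Y' \ Y).card : ℝ) ≤ τ * |((n - n/2 : ℕ) : ℝ) - (Y.card : ℝ)| :=
      mul_le_mul_of_nonneg_left hY'dev (le_of_lt hτ)
    have t3 : τ * r ≤ τ * (x + ν * n) :=
      mul_le_mul_of_nonneg_left (le_of_lt hX3) (le_of_lt hτ)
    have txup : τ * x ≤ τ * ((n:ℝ)/2 + ν * n) :=
      mul_le_mul_of_nonneg_left hxup (le_of_lt hτ)
    have tk2 : τ * (n:ℝ) ≤ τ * (2 * ((n/2 : ℕ) : ℝ) + 1) :=
      mul_le_mul_of_nonneg_left hkR2 (le_of_lt hτ)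
    have tk1 : τ * (2 * ((n/2 : ℕ) : ℝ)) ≤ τ * (n:ℝ) :=
      mul_le_mul_of_nonneg_left hkR1 (le_of_lt hτ)
    rcases abs_cases (((n - n/2 : ℕ) : ℝ) - (Y.card : ℝ)) with ⟨heq, _⟩ | ⟨heq, _⟩ <;>
      rw [heq, htYR, hYcard] at tdev
    · -- (n-k) - (n-r) = r - k
      linarith only [tdev, t3, txup, tk2, hτνn, hνn, hτ]
    · -- k - r ≤ n/2 - r
      linarith only [tdev, hrlow, tk1, hνn, hτ]
  -- move the edge bound
  have hmoveR : ((G.filter fun e => e.1 ∈ X' ∧ e.2 ∈ Y').card : ℝ) ≤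
      ((G.filter fun e => e.1 ∈ X ∧ e.2 ∈ Y).card : ℝ)
        + ((X' \ X).card : ℝ) * n + ((Y' \ Y).card : ℝ) * n := by
    exact_mod_cast card_filter_move G X X' Y Y'
  have hfinal : ((G.filter fun e => e.1 ∈ X' ∧ e.2 ∈ Y').card : ℝ) < ε * (n:ℝ)^2 := by
    have hnn : (0:ℝ) ≤ (n:ℝ) * n := by positivity
    have a1 : ν * ((n:ℝ) * n) ≤ (ε * τ / 10) * ((n:ℝ) * n) :=
      mul_le_mul_of_nonneg_right hνν₀ hnn
    have c1 : τ * ((G.filter fun e => e.1 ∈ X' ∧ e.2 ∈ Y').card : ℝ) ≤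
        τ * (ν * n * n) + (2 * ν * n + τ) * n + (2 * ν * n + τ) * n := by
      have m1 := mul_le_mul_of_nonneg_left hmoveR (le_of_lt hτ)
      have m2 := mul_le_mul_of_nonneg_left hEXY (le_of_lt hτ)
      have m3 := mul_le_mul_of_nonneg_right hdX (le_of_lt hnpos)
      have m4 := mul_le_mul_of_nonneg_right hdY (le_of_lt hnpos)
      linarith only [m1, m2, m3, m4]
    have c2 : τ * (ν * n * n) ≤ (ε * τ / 10) * ((n:ℝ) * n) := by
      have p1 : (0:ℝ) ≤ (1 - τ) * (ν * ((n:ℝ) * n)) :=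
        mul_nonneg (by linarith) (mul_nonneg (le_of_lt hν) hnn)
      linarith only [p1, a1]
    have c3 : (2 * ν * n + τ) * (n:ℝ) ≤ 2 * ((ε * τ / 10) * ((n:ℝ) * n)) + τ * n := by
      linarith only [a1]
    have c4 : τ * (n:ℝ) * 4 < τ * (n:ℝ) * (ε * n) :=
      mul_lt_mul_of_pos_left hεn (mul_pos hτ hnpos)
    have hstep : ((G.filter fun e => e.1 ∈ X' ∧ e.2 ∈ Y').card : ℝ) * τ
        < ε * (n:ℝ)^2 * τ := by
      have hpow : ε * (n:ℝ)^2 * τ = ε * τ * ((n:ℝ) * n) := by ring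
      rw [hpow]
      linarith only [c1, c2, c3, c4]
    exact lt_of_mul_lt_mul_right hstep (le_of_lt hτ)
  -- Step H: build the partition
  refine ⟨X' ∩ Y', Finset.univ \ (X' ∪ Y'), X' \ Y', Y' \ X', ?_, ?_, ?_, ?_⟩
  · refine ⟨?_, ?_, ?_, ?_, ?_, ?_, ?_⟩
    · ext v
      simp only [Finset.mem_union, Finset.mem_inter, Finset.mem_sdiff, Finset.mem_univ,
        iff_true, true_and]
      tauto
    · rw [Finset.disjoint_left]; intro v hv hv'
      simp only [Finset.mem_inter, Finset.mem_sdiff, Finset.mem_univ, Finset.mem_union,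
        true_and] at hv hv'
      tauto
    · rw [Finset.disjoint_left]; intro v hv hv'
      simp only [Finset.mem_inter, Finset.mem_sdiff] at hv hv'
      tauto
    · rw [Finset.disjoint_left]; intro v hv hv'
      simp only [Finset.mem_inter, Finset.mem_sdiff] at hv hv'
      tauto
    · rw [Finset.disjoint_left]; intro v hv hv'
      simp only [Finset.mem_sdiff, Finset.mem_univ, Finset.mem_union, true_and] at hv hv'
      tauto
    · rw [Finset.disjoint_left]; intro v hv hv'
      simp only [Finset.mem_sdiff, Finset.mem_univ, Finset.mem_union, true_and] at hv hv'
      tauto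
    · rw [Finset.disjoint_left]; intro v hv hv'
      simp only [Finset.mem_sdiff] at hv hv'
      tauto
  · -- |A| = |B|
    have h1 : (X' ∩ Y').card + (X' ∪ Y').card = X'.card + Y'.card :=
      Finset.card_inter_add_card_union X' Y'
    have h2 : (Finset.univ \ (X' ∪ Y')).card + (X' ∪ Y').card = n := by
      rw [Finset.card_sdiff_of_subset (Finset.subset_univ _)]
      have := Finset.card_le_univ (X' ∪ Y')
      simp only [Finset.card_univ, Fintype.card_fin] at *
      omega
    have h3 : (X' ∩ Y').card = (Finset.univ \ (X' ∪ Y')).card := by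
      rw [hX'card, hY'card] at h1
      omega
    rw [h3]
    simp
  · -- |S| vs |T|
    have h1 : (X' ∩ Y').card + (X' \ Y').card = X'.card :=
      Finset.card_inter_add_card_sdiff X' Y'
    have h2 : (Y' ∩ X').card + (Y' \ X').card = Y'.card :=
      Finset.card_inter_add_card_sdiff Y' X'
    rw [Finset.inter_comm Y' X'] at h2
    rw [hX'card] at h1
    rw [hY'card] at h2
    have h3 : (X' \ Y').card ≤ (Y' \ X').card ∧ (Y' \ X').card ≤ (X' \ Y').card + 1 := by
      omega
    rw [abs_le]
    constructor
    · have h4 : ((Y' \ X').card : ℝ) ≤ ((X' \ Y').card : ℝ) + 1 := by exact_mod_cast h3.2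
      linarith
    · have h4 : ((X' \ Y').card : ℝ) ≤ ((Y' \ X').card : ℝ) := by exact_mod_cast h3.1
      linarith
  · -- edge count
    have hAS : (X' ∩ Y') ∪ (X' \ Y') = X' := by
      ext v
      simp only [Finset.mem_union, Finset.mem_inter, Finset.mem_sdiff]
      tauto
    have hAT : (X' ∩ Y') ∪ (Y' \ X') = Y' := by
      ext v
      simp only [Finset.mem_union, Finset.mem_inter, Finset.mem_sdiff]
      tauto
    rw [hAS, hAT]
    exact hfinal
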